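/- Let D ⊂ ℝ² be a bounded set and let H be a planar axis-aligned region with D ⊆ H. Then conv{(x₁,x₂,μ) ∈ ℝ³ : μ = x₁x₂, (x₁,x₂) ∈ H} = conv{(v₁,v₂,μ) ∈ ℝ³ : μ = v₁v₂, (v₁,v₂) ∈ corner(H)}. In particular, this set is a polyhedral (finitely generated) convex relaxation of {(x₁,x₂,μ) : μ = x₁x₂, (x₁,x₂) ∈ D}. -/

import Mathlib

open Set

private def fgr : ℝ × ℝ → ℝ × ℝ × ℝ := fun v => (v.1, v.2, v.1 * v.2)

private lemma graph_eq_image (S : Set (ℝ × ℝ)) :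
    {p : ℝ × ℝ × ℝ | p.2.2 = p.1 * p.2.1 ∧ (p.1, p.2.1) ∈ S} = fgr '' S := by
  ext ⟨x, y, μ⟩
  constructor
  · rintro ⟨h1, h2⟩
    exact ⟨(x, y), h2, by simp only [fgr]; simp at h1; rw [h1]⟩
  · rintro ⟨⟨a, b⟩, hab, h⟩
    simp only [fgr, Prod.mk.injEq] at h
    obtain ⟨rfl, rfl, rfl⟩ := h
    exact ⟨rfl, hab⟩

private lemma convexHull_real_subset_Icc {S : Set ℝ} (hb : BddBelow S) (ha : BddAbove S) :
    convexHull ℝ S ⊆ Icc (sInf S) (sSup S) :=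
  convexHull_min (fun y hy => ⟨csInf_le hb hy, le_csSup ha hy⟩) (convex_Icc _ _)

private lemma not_extreme_between {S : Set ℝ} (hS : IsCompact S) {x : ℝ} (hx : x ∈ S)
    (hne : x ∉ Set.extremePoints ℝ (convexHull ℝ S)) : sInf S < x ∧ x < sSup S := by
  rw [mem_extremePoints, not_and] at hne
  push_neg at hne
  have hxc : x ∈ convexHull ℝ S := subset_convexHull ℝ S hx
  obtain ⟨x₁, h₁, x₂, h₂, hseg, hne'⟩ := hne hxc
  have hsub := convexHull_real_subset_Icc hS.bddBelow hS.bddAbove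
  have hI₁ := hsub h₁
  have hI₂ := hsub h₂
  rcases lt_trichotomy x₁ x₂ with h | h | h
  · rw [openSegment_eq_Ioo h] at hseg
    exact ⟨lt_of_le_of_lt hI₁.1 hseg.1, lt_of_lt_of_le hseg.2 hI₂.2⟩
  · subst h
    rw [openSegment_same] at hseg
    simp only [mem_singleton_iff] at hseg
    subst hseg
    exact absurd rfl (hne' rfl)
  · rw [openSegment_symm, openSegment_eq_Ioo h] at hseg
    exact ⟨lt_of_le_of_lt hI₂.1 hseg.1, lt_of_lt_of_le hseg.2 hI₁.2⟩

private lemma extreme_eq_endpoint {S : Set ℝ} (hS : IsCompact S) (hne : S.Nonempty) {x : ℝ}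
    (hx : x ∈ Set.extremePoints ℝ (convexHull ℝ S)) : x = sInf S ∨ x = sSup S := by
  rw [mem_extremePoints] at hx
  obtain ⟨hxc, hext⟩ := hx
  have hI := convexHull_real_subset_Icc hS.bddBelow hS.bddAbove hxc
  by_contra hcon
  push_neg at hcon
  have h1 : sInf S < x := lt_of_le_of_ne hI.1 (Ne.symm hcon.1)
  have h2 : x < sSup S := lt_of_le_of_ne hI.2 hcon.2
  have hmem : x ∈ openSegment ℝ (sInf S) (sSup S) := by
    rw [openSegment_eq_Ioo (h1.trans h2)]; exact ⟨h1, h2⟩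
  have := hext _ (subset_convexHull ℝ S (hS.sInf_mem hne)) _
    (subset_convexHull ℝ S (hS.sSup_mem hne)) hmem
  exact absurd this.1 (ne_of_lt h1)

private lemma bilinear_cell {a b c d x y : ℝ} (hax : a ≤ x) (hxb : x ≤ b)
    (hcy : c ≤ y) (hyd : y ≤ d) :
    fgr (x, y) ∈ convexHull ℝ (fgr '' ({(a, c), (a, d), (b, c), (b, d)} : Set (ℝ × ℝ))) := by
  obtain ⟨s, t, hs, ht, hst, hxst⟩ : x ∈ segment ℝ a b := by
    rw [segment_eq_Icc (hax.trans hxb)]; exact ⟨hax, hxb⟩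
  obtain ⟨u, v, hu, hv, huv, hyuv⟩ : y ∈ segment ℝ c d := by
    rw [segment_eq_Icc (hcy.trans hyd)]; exact ⟨hcy, hyd⟩
  simp only [smul_eq_mul] at hxst hyuv
  have hcv : Convex ℝ (convexHull ℝ (fgr '' ({(a, c), (a, d), (b, c), (b, d)} : Set (ℝ × ℝ)))) :=
    convex_convexHull ℝ _
  have hmem : ∀ w ∈ ({(a, c), (a, d), (b, c), (b, d)} : Set (ℝ × ℝ)),
      fgr w ∈ convexHull ℝ (fgr '' ({(a, c), (a, d), (b, c), (b, d)} : Set (ℝ × ℝ))) :=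
    fun w hw => subset_convexHull ℝ _ ⟨w, hw, rfl⟩
  have h1 : fgr (x, c) ∈ convexHull ℝ (fgr '' ({(a, c), (a, d), (b, c), (b, d)} : Set (ℝ × ℝ))) := by
    refine hcv.segment_subset (hmem (a, c) (by simp)) (hmem (b, c) (by simp))
      ⟨s, t, hs, ht, hst, ?_⟩
    simp only [fgr, Prod.smul_mk, smul_eq_mul, Prod.mk_add_mk, Prod.mk.injEq]
    refine ⟨hxst, by linear_combination c * hst, by linear_combination c * hxst⟩
  have h2 : fgr (x, d) ∈ convexHull ℝ (fgr '' ({(a, c), (a, d), (b, c), (b, d)} : Set (ℝ × ℝ))) := by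
    refine hcv.segment_subset (hmem (a, d) (by simp)) (hmem (b, d) (by simp))
      ⟨s, t, hs, ht, hst, ?_⟩
    simp only [fgr, Prod.smul_mk, smul_eq_mul, Prod.mk_add_mk, Prod.mk.injEq]
    refine ⟨hxst, by linear_combination d * hst, by linear_combination d * hxst⟩
  refine hcv.segment_subset h1 h2 ⟨u, v, hu, hv, huv, ?_⟩
  simp only [fgr, Prod.smul_mk, smul_eq_mul, Prod.mk_add_mk, Prod.mk.injEq]
  exact ⟨by linear_combination x * huv, hyuv, by linear_combination x * hyuv⟩

private lemma graph_openSegment_fst {m M x y : ℝ} (h1 : m < x) (h2 : x < M) :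
    fgr (x, y) ∈ openSegment ℝ (fgr (m, y)) (fgr (M, y)) := by
  have hd : (0:ℝ) < M - m := by linarith
  refine ⟨(M - x)/(M - m), (x - m)/(M - m), div_pos (by linarith) hd, div_pos (by linarith) hd,
    by field_simp; ring, ?_⟩
  simp only [fgr, Prod.smul_mk, smul_eq_mul, Prod.mk_add_mk, Prod.mk.injEq]
  refine ⟨?_, ?_, ?_⟩ <;> field_simp <;> ring

private lemma graph_openSegment_snd {m M x y : ℝ} (h1 : m < y) (h2 : y < M) :
    fgr (x, y) ∈ openSegment ℝ (fgr (x, m)) (fgr (x, M)) := by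
  have hd : (0:ℝ) < M - m := by linarith
  refine ⟨(M - y)/(M - m), (y - m)/(M - m), div_pos (by linarith) hd, div_pos (by linarith) hd,
    by field_simp; ring, ?_⟩
  simp only [fgr, Prod.smul_mk, smul_eq_mul, Prod.mk_add_mk, Prod.mk.injEq]
  refine ⟨?_, ?_, ?_⟩ <;> field_simp <;> ring



/-- A planar axis-aligned region: a finite union of closed axis-aligned rectangles. -/
def IsPlanarAxisAligned (H : Set (ℝ × ℝ)) : Prop :=
  ∃ R : Finset ((ℝ × ℝ) × (ℝ × ℝ)),
    (∀ r ∈ R, r.1.1 ≤ r.2.1 ∧ r.1.2 ≤ r.2.2) ∧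
    H = ⋃ r ∈ R, Set.Icc r.1.1 r.2.1 ×ˢ Set.Icc r.1.2 r.2.2

/-- The corner points of a planar region `H`: points of `H` each of whose coordinates is an
extreme point of the convex hull of the corresponding axis-parallel slice of `H`. -/
def cornerSet (H : Set (ℝ × ℝ)) : Set (ℝ × ℝ) :=
  {v | v ∈ H ∧
    v.1 ∈ Set.extremePoints ℝ (convexHull ℝ {x1 : ℝ | (x1, v.2) ∈ H}) ∧
    v.2 ∈ Set.extremePoints ℝ (convexHull ℝ {x2 : ℝ | (v.1, x2) ∈ H})}

/-- The convex hull of the graph of `x₁x₂` over an axis-aligned outer approximation `H` of a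
bounded set `D` is generated by the finitely many corner points of `H`; in particular it is a
polyhedral (finitely generated) convex relaxation of the graph of `x₁x₂` over `D`. -/
theorem bilinear_over_axis_aligned_region_corner_generated
    (D H : Set (ℝ × ℝ)) (hD : Bornology.IsBounded D)
    (hH : IsPlanarAxisAligned H) (hDH : D ⊆ H) :
    convexHull ℝ {p : ℝ × ℝ × ℝ | p.2.2 = p.1 * p.2.1 ∧ (p.1, p.2.1) ∈ H} =
      convexHull ℝ {p : ℝ × ℝ × ℝ | p.2.2 = p.1 * p.2.1 ∧ (p.1, p.2.1) ∈ cornerSet H} ∧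
    Set.Finite {p : ℝ × ℝ × ℝ | p.2.2 = p.1 * p.2.1 ∧ (p.1, p.2.1) ∈ cornerSet H} ∧
    {p : ℝ × ℝ × ℝ | p.2.2 = p.1 * p.2.1 ∧ (p.1, p.2.1) ∈ D} ⊆
      convexHull ℝ {p : ℝ × ℝ × ℝ | p.2.2 = p.1 * p.2.1 ∧ (p.1, p.2.1) ∈ H} := by
  classical
  obtain ⟨R, hRle, hHeq⟩ := hH
  -- basic facts
  have hrectH : ∀ r ∈ R, ∀ p : ℝ × ℝ,
      p.1 ∈ Icc r.1.1 r.2.1 → p.2 ∈ Icc r.1.2 r.2.2 → p ∈ H := by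
    intro r hr p h1 h2
    rw [hHeq]
    exact mem_biUnion hr ⟨h1, h2⟩
  have hHrect : ∀ p : ℝ × ℝ, p ∈ H →
      ∃ r ∈ R, p.1 ∈ Icc r.1.1 r.2.1 ∧ p.2 ∈ Icc r.1.2 r.2.2 := by
    intro p hp
    rw [hHeq, mem_iUnion₂] at hp
    obtain ⟨r, hr, h⟩ := hp
    exact ⟨r, hr, h.1, h.2⟩
  have hHc : IsCompact H := by
    rw [hHeq]
    exact R.finite_toSet.isCompact_biUnion fun r _ => (isCompact_Icc).prod isCompact_Icc
  -- compactness of axis-parallel slices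
  have hsx : ∀ y : ℝ, IsCompact {x1 : ℝ | (x1, y) ∈ H} := by
    intro y
    have hcl : IsClosed {x1 : ℝ | (x1, y) ∈ H} :=
      hHc.isClosed.preimage (Continuous.prodMk continuous_id continuous_const)
    have hbd : Bornology.IsBounded {x1 : ℝ | (x1, y) ∈ H} :=
      ((hHc.image continuous_fst).isBounded).subset fun x hx => ⟨(x, y), hx, rfl⟩
    exact Metric.isCompact_of_isClosed_isBounded hcl hbd
  have hsy : ∀ x : ℝ, IsCompact {x2 : ℝ | (x, x2) ∈ H} := by
    intro x
    have hcl : IsClosed {x2 : ℝ | (x, x2) ∈ H} :=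
      hHc.isClosed.preimage (Continuous.prodMk continuous_const continuous_id)
    have hbd : Bornology.IsBounded {x2 : ℝ | (x, x2) ∈ H} :=
      ((hHc.image continuous_snd).isBounded).subset fun y hy => ⟨(x, y), hy, rfl⟩
    exact Metric.isCompact_of_isClosed_isBounded hcl hbd
  -- the finite grid
  set Xs : Finset ℝ := R.image (fun r => r.1.1) ∪ R.image (fun r => r.2.1) with hXs
  set Ys : Finset ℝ := R.image (fun r => r.1.2) ∪ R.image (fun r => r.2.2) with hYs
  set W : Set (ℝ × ℝ) := ((Xs : Set ℝ) ×ˢ (Ys : Set ℝ)) ∩ H with hW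
  have hWfin : W.Finite := (Xs.finite_toSet.prod Ys.finite_toSet).inter_of_left H
  have hWH : W ⊆ H := inter_subset_right
  -- every graph point over H lies in the hull of grid graph points
  have hGW : fgr '' H ⊆ convexHull ℝ (fgr '' W) := by
    rintro - ⟨⟨x, y⟩, hxy, rfl⟩
    obtain ⟨r, hr, hx1, hy1⟩ := hHrect (x, y) hxy
    have ha1 : r.1.1 ∈ Xs.filter (fun t => t ≤ x) :=
      Finset.mem_filter.2 ⟨Finset.mem_union_left _ (Finset.mem_image.2 ⟨r, hr, rfl⟩), hx1.1⟩
    have hb1 : r.2.1 ∈ Xs.filter (fun t => x ≤ t) :=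
      Finset.mem_filter.2 ⟨Finset.mem_union_right _ (Finset.mem_image.2 ⟨r, hr, rfl⟩), hx1.2⟩
    have hc1 : r.1.2 ∈ Ys.filter (fun t => t ≤ y) :=
      Finset.mem_filter.2 ⟨Finset.mem_union_left _ (Finset.mem_image.2 ⟨r, hr, rfl⟩), hy1.1⟩
    have hd1 : r.2.2 ∈ Ys.filter (fun t => y ≤ t) :=
      Finset.mem_filter.2 ⟨Finset.mem_union_right _ (Finset.mem_image.2 ⟨r, hr, rfl⟩), hy1.2⟩
    set a := (Xs.filter (fun t => t ≤ x)).max' ⟨_, ha1⟩ with hadef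
    set b := (Xs.filter (fun t => x ≤ t)).min' ⟨_, hb1⟩ with hbdef
    set c := (Ys.filter (fun t => t ≤ y)).max' ⟨_, hc1⟩ with hcdef
    set d := (Ys.filter (fun t => y ≤ t)).min' ⟨_, hd1⟩ with hddef
    have haX : a ∈ Xs := (Finset.mem_filter.1 (Finset.max'_mem _ _)).1
    have hbX : b ∈ Xs := (Finset.mem_filter.1 (Finset.min'_mem _ _)).1
    have hcY : c ∈ Ys := (Finset.mem_filter.1 (Finset.max'_mem _ _)).1
    have hdY : d ∈ Ys := (Finset.mem_filter.1 (Finset.min'_mem _ _)).1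
    have hax : a ≤ x :=
      (Finset.mem_filter.1 (Finset.max'_mem (Xs.filter (fun t => t ≤ x)) ⟨_, ha1⟩)).2
    have hxb : x ≤ b :=
      (Finset.mem_filter.1 (Finset.min'_mem (Xs.filter (fun t => x ≤ t)) ⟨_, hb1⟩)).2
    have hcy : c ≤ y :=
      (Finset.mem_filter.1 (Finset.max'_mem (Ys.filter (fun t => t ≤ y)) ⟨_, hc1⟩)).2
    have hyd : y ≤ d :=
      (Finset.mem_filter.1 (Finset.min'_mem (Ys.filter (fun t => y ≤ t)) ⟨_, hd1⟩)).2
    have hra : r.1.1 ≤ a := Finset.le_max' _ _ ha1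
    have hbr : b ≤ r.2.1 := Finset.min'_le _ _ hb1
    have hrc : r.1.2 ≤ c := Finset.le_max' _ _ hc1
    have hdr : d ≤ r.2.2 := Finset.min'_le _ _ hd1
    have hcornH : ∀ u v : ℝ, u ∈ Icc r.1.1 r.2.1 → v ∈ Icc r.1.2 r.2.2 → (u, v) ∈ H :=
      fun u v h1 h2 => hrectH r hr (u, v) h1 h2
    have haI : a ∈ Icc r.1.1 r.2.1 := ⟨hra, hax.trans hx1.2⟩
    have hbI : b ∈ Icc r.1.1 r.2.1 := ⟨hx1.1.trans hxb, hbr⟩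
    have hcI : c ∈ Icc r.1.2 r.2.2 := ⟨hrc, hcy.trans hy1.2⟩
    have hdI : d ∈ Icc r.1.2 r.2.2 := ⟨hy1.1.trans hyd, hdr⟩
    have hsubW : ({(a, c), (a, d), (b, c), (b, d)} : Set (ℝ × ℝ)) ⊆ W := by
      rintro p (rfl | rfl | rfl | rfl)
      · exact ⟨⟨haX, hcY⟩, hcornH a c haI hcI⟩
      · exact ⟨⟨haX, hdY⟩, hcornH a d haI hdI⟩
      · exact ⟨⟨hbX, hcY⟩, hcornH b c hbI hcI⟩
      · exact ⟨⟨hbX, hdY⟩, hcornH b d hbI hdI⟩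
    exact convexHull_mono (image_mono hsubW) (bilinear_cell hax hxb hcy hyd)
  -- hence the hull over H equals the hull over the finite grid, so it is compact
  have hullEqW : convexHull ℝ (fgr '' H) = convexHull ℝ (fgr '' W) := by
    refine Subset.antisymm ?_ (convexHull_mono (image_mono hWH))
    exact convexHull_min hGW (convex_convexHull ℝ _)
  have hcomp : IsCompact (convexHull ℝ (fgr '' H)) := by
    rw [hullEqW]
    exact (hWfin.image fgr).isCompact_convexHull ℝ
  -- extreme points of the hull lie over corners
  have hext : Set.extremePoints ℝ (convexHull ℝ (fgr '' H)) ⊆ fgr '' cornerSet H := by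
    intro p hp
    have hpG : p ∈ fgr '' H := extremePoints_convexHull_subset hp
    obtain ⟨⟨x, y⟩, hxyH, rfl⟩ := hpG
    rw [mem_extremePoints] at hp
    refine ⟨(x, y), ⟨hxyH, ?_, ?_⟩, rfl⟩
    · by_contra hnot
      obtain ⟨h1, h2⟩ := not_extreme_between (hsx y) (show x ∈ {x1 : ℝ | (x1, y) ∈ H} from hxyH) hnot
      set S := {x1 : ℝ | (x1, y) ∈ H}
      have hm : sInf S ∈ S := (hsx y).sInf_mem ⟨x, hxyH⟩
      have hM : sSup S ∈ S := (hsx y).sSup_mem ⟨x, hxyH⟩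
      have := hp.2 (fgr (sInf S, y)) (subset_convexHull ℝ _ ⟨_, hm, rfl⟩)
        (fgr (sSup S, y)) (subset_convexHull ℝ _ ⟨_, hM, rfl⟩)
        (graph_openSegment_fst h1 h2)
      have : sInf S = x := congrArg (fun q : ℝ × ℝ × ℝ => q.1) this.1
      exact absurd this (ne_of_lt h1)
    · by_contra hnot
      obtain ⟨h1, h2⟩ := not_extreme_between (hsy x) (show y ∈ {x2 : ℝ | (x, x2) ∈ H} from hxyH) hnot
      set S := {x2 : ℝ | (x, x2) ∈ H}
      have hm : sInf S ∈ S := (hsy x).sInf_mem ⟨y, hxyH⟩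
      have hM : sSup S ∈ S := (hsy x).sSup_mem ⟨y, hxyH⟩
      have := hp.2 (fgr (x, sInf S)) (subset_convexHull ℝ _ ⟨_, hm, rfl⟩)
        (fgr (x, sSup S)) (subset_convexHull ℝ _ ⟨_, hM, rfl⟩)
        (graph_openSegment_snd h1 h2)
      have : sInf S = y := congrArg (fun q : ℝ × ℝ × ℝ => q.2.1) this.1
      exact absurd this (ne_of_lt h1)
  -- corners are finitely many
  have hcfin : (cornerSet H).Finite := by
    refine ((Xs.finite_toSet.prod Ys.finite_toSet)).subset ?_
    rintro ⟨x, y⟩ ⟨hvH, hex, hey⟩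
    have hvH' : (x, y) ∈ H := hvH
    constructor
    · -- x ∈ Xs
      have hSne : {x1 : ℝ | (x1, y) ∈ H}.Nonempty := ⟨x, hvH'⟩
      rcases extreme_eq_endpoint (hsx y) hSne hex with h | h
      · obtain ⟨r, hr, hx1, hy1⟩ := hHrect (x, y) hvH'
        have hrS : r.1.1 ∈ {x1 : ℝ | (x1, y) ∈ H} :=
          hrectH r hr (r.1.1, y) ⟨le_refl _, (hRle r hr).1⟩ hy1
        have h' : x = sInf {x1 : ℝ | (x1, y) ∈ H} := h
        have h1 : x ≤ r.1.1 := by rw [h']; exact csInf_le (hsx y).bddBelow hrS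
        have h2 : r.1.1 ≤ x := hx1.1
        have : x = r.1.1 := le_antisymm h1 h2
        exact Finset.mem_union_left _ (Finset.mem_image.2 ⟨r, hr, this.symm⟩)
      · obtain ⟨r, hr, hx1, hy1⟩ := hHrect (x, y) hvH'
        have hrS : r.2.1 ∈ {x1 : ℝ | (x1, y) ∈ H} :=
          hrectH r hr (r.2.1, y) ⟨(hRle r hr).1, le_refl _⟩ hy1
        have h' : x = sSup {x1 : ℝ | (x1, y) ∈ H} := h
        have h1 : r.2.1 ≤ x := by rw [h']; exact le_csSup (hsx y).bddAbove hrS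
        have : x = r.2.1 := le_antisymm hx1.2 h1
        exact Finset.mem_union_right _ (Finset.mem_image.2 ⟨r, hr, this.symm⟩)
    · -- y ∈ Ys
      have hSne : {x2 : ℝ | (x, x2) ∈ H}.Nonempty := ⟨y, hvH'⟩
      rcases extreme_eq_endpoint (hsy x) hSne hey with h | h
      · obtain ⟨r, hr, hx1, hy1⟩ := hHrect (x, y) hvH'
        have hrS : r.1.2 ∈ {x2 : ℝ | (x, x2) ∈ H} :=
          hrectH r hr (x, r.1.2) hx1 ⟨le_refl _, (hRle r hr).2⟩
        have h' : y = sInf {x2 : ℝ | (x, x2) ∈ H} := h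
        have h1 : y ≤ r.1.2 := by rw [h']; exact csInf_le (hsy x).bddBelow hrS
        have : y = r.1.2 := le_antisymm h1 hy1.1
        exact Finset.mem_union_left _ (Finset.mem_image.2 ⟨r, hr, this.symm⟩)
      · obtain ⟨r, hr, hx1, hy1⟩ := hHrect (x, y) hvH'
        have hrS : r.2.2 ∈ {x2 : ℝ | (x, x2) ∈ H} :=
          hrectH r hr (x, r.2.2) hx1 ⟨(hRle r hr).2, le_refl _⟩
        have h' : y = sSup {x2 : ℝ | (x, x2) ∈ H} := h
        have h1 : r.2.2 ≤ y := by rw [h']; exact le_csSup (hsy x).bddAbove hrS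
        have : y = r.2.2 := le_antisymm hy1.2 h1
        exact Finset.mem_union_right _ (Finset.mem_image.2 ⟨r, hr, this.symm⟩)
  refine ⟨?_, ?_, fun p hp => subset_convexHull ℝ _ ⟨hp.1, hDH hp.2⟩⟩
  · rw [graph_eq_image, graph_eq_image]
    refine Subset.antisymm ?_ (convexHull_mono (image_mono fun v hv => hv.1))
    have hKM := closure_convexHull_extremePoints hcomp (convex_convexHull ℝ _)
    calc convexHull ℝ (fgr '' H)
        = closure (convexHull ℝ (Set.extremePoints ℝ (convexHull ℝ (fgr '' H)))) := hKM.symm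
      _ ⊆ closure (convexHull ℝ (fgr '' cornerSet H)) := closure_mono (convexHull_mono hext)
      _ = convexHull ℝ (fgr '' cornerSet H) :=
          ((hcfin.image fgr).isClosed_convexHull ℝ).closure_eq
  · rw [graph_eq_image]
    exact hcfin.image fgr
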